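/- An element y of the ambient field F belongs to ZP[x₁, x'₁, x₂^{±1},…,x_n^{±1}] if and only if y can be written as y = Σ_{m=-N}^{N} c_m x₁^m with each c_m ∈ ZP[x₂^{±1},…,x_n^{±1}] and c_{-m} divisible by P₁^m in ZP[x₂^{±1},…,x_n^{±1}] for m = 1,…,N. -/

import Mathlib

open MvPolynomial

/-- The image of the variable `xᵢ` in the field of rational functions over `R`. -/
noncomputable def Xfrac (R : Type*) [CommRing R] [IsDomain R] (n : ℕ) (i : Fin n) :
    FractionRing (MvPolynomial (Fin n) R) :=
  algebraMap (MvPolynomial (Fin n) R) _ (MvPolynomial.X i)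

theorem aux_mem_iff {R F : Type*} [CommRing R] [Field F] [Algebra R F]
    (s : Set F) (x P : F) (hx : x ≠ 0) (hPS : P ∈ Algebra.adjoin R s) (y : F) :
    y ∈ Algebra.adjoin R (({x, P / x} : Set F) ∪ s) ↔
      ∃ (N : ℕ) (c : ℤ → F),
        (∀ m : ℤ, c m ∈ Algebra.adjoin R s) ∧
        (∀ m : ℕ, 1 ≤ m → m ≤ N → ∃ d ∈ Algebra.adjoin R s, c (-(m : ℤ)) = d * P ^ m) ∧
        y = ∑ m ∈ Finset.Icc (-(N : ℤ)) (N : ℤ), c m * x ^ m := by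
  set S := Algebra.adjoin R s with hS
  -- the normalized representation predicate
  set Rep : F → Prop := fun z => ∃ N : ℕ, ∃ c : ℤ → F,
    (∀ m : ℤ, c m ∈ S) ∧
    (∀ m : ℕ, 1 ≤ m → m ≤ N → ∃ d ∈ S, c (-(m : ℤ)) = d * P ^ m) ∧
    (∀ m : ℤ, m ∉ Finset.Icc (-(N : ℤ)) (N : ℤ) → c m = 0) ∧
    z = ∑ m ∈ Finset.Icc (-(N : ℤ)) (N : ℤ), c m * x ^ m with hRep
  have pad : ∀ (N N' : ℕ) (c : ℤ → F), N ≤ N' →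
      (∀ m : ℕ, 1 ≤ m → m ≤ N → ∃ d ∈ S, c (-(m : ℤ)) = d * P ^ m) →
      (∀ m : ℤ, m ∉ Finset.Icc (-(N : ℤ)) (N : ℤ) → c m = 0) →
      ((∀ m : ℕ, 1 ≤ m → m ≤ N' → ∃ d ∈ S, c (-(m : ℤ)) = d * P ^ m) ∧
       (∀ m : ℤ, m ∉ Finset.Icc (-(N' : ℤ)) (N' : ℤ) → c m = 0) ∧
       ∑ m ∈ Finset.Icc (-(N' : ℤ)) (N' : ℤ), c m * x ^ m
         = ∑ m ∈ Finset.Icc (-(N : ℤ)) (N : ℤ), c m * x ^ m) := by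
    intro N N' c hNN' hdiv hzero
    refine ⟨?_, ?_, ?_⟩
    · intro m h1 hN'
      by_cases h : m ≤ N
      · exact hdiv m h1 h
      · refine ⟨0, zero_mem _, ?_⟩
        rw [hzero, zero_mul]
        simp only [Finset.mem_Icc]
        omega
    · intro m hm
      apply hzero
      simp only [Finset.mem_Icc] at hm ⊢
      omega
    · symm
      apply Finset.sum_subset
      · intro k hk
        simp only [Finset.mem_Icc] at hk ⊢
        omega
      · intro k _ hk
        rw [hzero k hk, zero_mul]
  have hzeroRep : Rep 0 := by
    refine ⟨0, fun _ => 0, fun m => zero_mem _, ?_, fun m _ => rfl, by simp⟩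
    intro m h1 h0; omega
  have hadd : ∀ a b : F, Rep a → Rep b → Rep (a + b) := by
    rintro a b ⟨N, c, hc, hdiv, hz, rfl⟩ ⟨N', c', hc', hdiv', hz', rfl⟩
    obtain ⟨hdiv2, hz2, hsum2⟩ := pad N (max N N') c (le_max_left _ _) hdiv hz
    obtain ⟨hdiv2', hz2', hsum2'⟩ := pad N' (max N N') c' (le_max_right _ _) hdiv' hz'
    refine ⟨max N N', fun m => c m + c' m, fun m => add_mem (hc m) (hc' m), ?_, ?_, ?_⟩
    · intro m h1 hm
      obtain ⟨d, hd, hcd⟩ := hdiv2 m h1 hm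
      obtain ⟨d', hd', hcd'⟩ := hdiv2' m h1 hm
      exact ⟨d + d', add_mem hd hd', by dsimp only; rw [hcd, hcd', add_mul]⟩
    · intro m hm
      dsimp only
      rw [hz2 m hm, hz2' m hm, add_zero]
    · rw [← hsum2, ← hsum2', ← Finset.sum_add_distrib]
      exact Finset.sum_congr rfl fun m _ => (add_mul _ _ _).symm
  have hsmul : ∀ (r : R) (a : F), Rep a → Rep (r • a) := by
    rintro r a ⟨N, c, hc, hdiv, hz, rfl⟩
    refine ⟨N, fun m => r • c m, fun m => Subalgebra.smul_mem _ (hc m) r, ?_, ?_, ?_⟩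
    · intro m h1 hm
      obtain ⟨d, hd, hcd⟩ := hdiv m h1 hm
      exact ⟨r • d, Subalgebra.smul_mem _ hd r, by dsimp only; rw [hcd, smul_mul_assoc]⟩
    · intro m hm
      dsimp only
      rw [hz m hm, smul_zero]
    · rw [Finset.smul_sum]
      exact Finset.sum_congr rfl fun m _ => (smul_mul_assoc _ _ _).symm
  -- single-monomial predicate
  set Q : F → Prop := fun z => ∃ t ∈ S, ∃ m : ℤ,
    z = t * x ^ m ∧ ∀ k : ℕ, 1 ≤ k → m = -(k : ℤ) → ∃ d ∈ S, t = d * P ^ k with hQ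
  have hQone : Q 1 := by
    refine ⟨1, one_mem _, 0, by simp, ?_⟩
    intro k h1 hk; omega
  have hQmul : ∀ a b : F, Q a → Q b → Q (a * b) := by
    rintro a b ⟨t, ht, m, rfl, hdiv⟩ ⟨t', ht', m', rfl, hdiv'⟩
    refine ⟨t * t', mul_mem ht ht', m + m', by rw [zpow_add₀ hx]; ring, ?_⟩
    intro k h1 hk
    rcases le_or_gt 0 m with hm | hm
    · -- m ≥ 0, so m' = -(k + m.toNat)
      obtain ⟨d', hd', hd'e⟩ := hdiv' (k + m.toNat) (by omega) (by omega)
      refine ⟨t * d' * P ^ m.toNat, mul_mem (mul_mem ht hd') (pow_mem hPS _), ?_⟩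
      rw [hd'e, pow_add]; ring
    · obtain ⟨d, hd, hde⟩ := hdiv (-m).toNat (by omega) (by omega)
      rcases le_or_gt 0 m' with hm' | hm'
      · -- m < 0 ≤ m', so (-m).toNat = k + m'.toNat
        refine ⟨d * t' * P ^ m'.toNat, mul_mem (mul_mem hd ht') (pow_mem hPS _), ?_⟩
        rw [hde, show (-m).toNat = k + m'.toNat by omega, pow_add]; ring
      · -- both negative: (-m).toNat + (-m').toNat = k
        obtain ⟨d', hd', hd'e⟩ := hdiv' (-m').toNat (by omega) (by omega)
        refine ⟨d * d', mul_mem hd hd', ?_⟩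
        rw [hde, hd'e, show k = (-m).toNat + (-m').toNat by omega, pow_add]; ring
  have hQRep : ∀ z : F, Q z → Rep z := by
    rintro z ⟨t, ht, m, rfl, hdiv⟩
    refine ⟨m.natAbs, fun k => if k = m then t else 0, ?_, ?_, ?_, ?_⟩
    · intro k
      dsimp only
      by_cases h : k = m
      · rw [if_pos h]; exact ht
      · rw [if_neg h]; exact zero_mem _
    · intro k h1 hk
      by_cases h : -(k : ℤ) = m
      · obtain ⟨d, hd, hde⟩ := hdiv k h1 h.symm
        exact ⟨d, hd, by dsimp only; rw [if_pos h, hde]⟩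
      · exact ⟨0, zero_mem _, by dsimp only; rw [if_neg h, zero_mul]⟩
    · intro k hk
      dsimp only
      rw [if_neg]
      rintro rfl
      apply hk
      simp only [Finset.mem_Icc]
      omega
    · have heq : ∀ k : ℤ, (if k = m then t else 0) * x ^ k
          = if k = m then t * x ^ m else 0 := by
        intro k
        split_ifs with h
        · rw [h]
        · rw [zero_mul]
      rw [Finset.sum_congr rfl fun k _ => heq k,
        Finset.sum_ite_eq' _ m (fun _ => t * x ^ m), if_pos]
      simp only [Finset.mem_Icc]
      omega
  have hQgen : ∀ z ∈ ({x, P / x} : Set F) ∪ s, Q z := by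
    rintro z (hz | hz)
    · rcases hz with hz | hz
      · refine ⟨1, one_mem _, 1, by simp [hz], ?_⟩
        intro k h1 hk; omega
      · simp only [Set.mem_singleton_iff] at hz
        refine ⟨P, hPS, -1, by rw [hz, div_eq_mul_inv, zpow_neg, zpow_one], ?_⟩
        intro k h1 hk
        have : k = 1 := by omega
        subst this
        exact ⟨1, one_mem _, by rw [one_mul, pow_one]⟩
    · refine ⟨z, Algebra.subset_adjoin hz, 0, by simp, ?_⟩
      intro k h1 hk; omega
  constructor
  · intro hy
    have hy' : y ∈ Submodule.span R ((Submonoid.closure (({x, P / x} : Set F) ∪ s) : Submonoid F) : Set F) := by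
      rw [← Algebra.adjoin_eq_span]
      exact hy
    have hrep : Rep y := by
      refine Submodule.span_induction (p := fun z _ => Rep z) ?_ hzeroRep
        (fun a b _ _ ha hb => hadd a b ha hb) (fun r a _ ha => hsmul r a ha) hy'
      intro z hz
      refine hQRep z ?_
      exact Submonoid.closure_induction (motive := fun w _ => Q w) (fun w hw => hQgen w hw) hQone
        (fun a b _ _ ha hb => hQmul a b ha hb) hz
    obtain ⟨N, c, hc, hdiv, _, hsum⟩ := hrep
    exact ⟨N, c, hc, hdiv, hsum⟩
  · rintro ⟨N, c, hc, hdiv, rfl⟩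
    have hSle : S ≤ Algebra.adjoin R (({x, P / x} : Set F) ∪ s) :=
      Algebra.adjoin_mono Set.subset_union_right
    have hxmem : x ∈ Algebra.adjoin R (({x, P / x} : Set F) ∪ s) :=
      Algebra.subset_adjoin (Or.inl (Or.inl rfl))
    have hx'mem : P / x ∈ Algebra.adjoin R (({x, P / x} : Set F) ∪ s) :=
      Algebra.subset_adjoin (Or.inl (Or.inr rfl))
    apply Subalgebra.sum_mem
    intro m hm
    simp only [Finset.mem_Icc] at hm
    rcases le_or_gt 0 m with h0 | h0
    · have : x ^ m = x ^ m.toNat := by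
        rw [← zpow_natCast]; congr 1; omega
      rw [this]
      exact mul_mem (hSle (hc m)) (pow_mem hxmem _)
    · have hk1 : 1 ≤ (-m).toNat := by omega
      have hkN : (-m).toNat ≤ N := by omega
      obtain ⟨d, hd, hde⟩ := hdiv (-m).toNat hk1 hkN
      have hmk : m = -((-m).toNat : ℤ) := by omega
      have hxk : x ^ m = (x ^ (-m).toNat : F)⁻¹ := by
        rw [← zpow_natCast x (-m).toNat, ← zpow_neg, ← hmk]
      have : c m * x ^ m = d * (P / x) ^ (-m).toNat := by
        rw [show c m = c (-(((-m).toNat : ℕ) : ℤ)) from by rw [← hmk], hde, hxk, div_pow,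
          div_eq_mul_inv]
        ring
      rw [this]
      exact mul_mem (hSle hd) (pow_mem hx'mem _)


theorem mem_lower_iff_laurent_divisible (R : Type*) [CommRing R] [IsDomain R] (n : ℕ)
    (P : MvPolynomial (Fin (n + 1)) R)
    (hP : ∃ (s t : Fin (n + 1) →₀ ℕ) (p q : Rˣ),
      P = monomial s (p : R) + monomial t (q : R) ∧ s 0 = 0 ∧ t 0 = 0) :
    letI F := FractionRing (MvPolynomial (Fin (n + 1)) R)
    let X : Fin (n + 1) → F := Xfrac R (n + 1)
    let aP : F := algebraMap (MvPolynomial (Fin (n + 1)) R) F P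
    let x₁' : F := aP / X 0
    let S : Subalgebra R F := Algebra.adjoin R
      (⋃ i ∈ {i : Fin (n + 1) | i ≠ 0}, ({X i, (X i)⁻¹} : Set F))
    ∀ y : F,
      (y ∈ Algebra.adjoin R (({X 0, x₁'} : Set F) ∪
        ⋃ i ∈ {i : Fin (n + 1) | i ≠ 0}, ({X i, (X i)⁻¹} : Set F))) ↔
      ∃ (N : ℕ) (c : ℤ → F),
        (∀ m : ℤ, c m ∈ S) ∧
        (∀ m : ℕ, 1 ≤ m → m ≤ N → ∃ d ∈ S, c (-(m : ℤ)) = d * aP ^ m) ∧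
        y = ∑ m ∈ Finset.Icc (-(N : ℤ)) (N : ℤ), c m * (X 0) ^ m := by
  obtain ⟨u, v, p, q, hPeq, hu0, hv0⟩ := hP
  intro X aP x₁' S y
  have hx : X 0 ≠ 0 := by
    show algebraMap (MvPolynomial (Fin (n + 1)) R) (FractionRing (MvPolynomial (Fin (n + 1)) R)) (MvPolynomial.X 0) ≠ 0
    rw [Ne, map_eq_zero_iff _ (IsFractionRing.injective _ _)]
    exact MvPolynomial.X_ne_zero 0
  have key : ∀ (w : Fin (n + 1) →₀ ℕ) (a : R), w 0 = 0 →
      algebraMap (MvPolynomial (Fin (n + 1)) R) (FractionRing (MvPolynomial (Fin (n + 1)) R)) (monomial w a) ∈ S := by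
    intro w a hw
    rw [MvPolynomial.monomial_eq, map_mul]
    apply mul_mem
    · have : (algebraMap (MvPolynomial (Fin (n + 1)) R) (FractionRing (MvPolynomial (Fin (n + 1)) R))) (C a) = algebraMap R _ a := by
        rw [IsScalarTower.algebraMap_apply R (MvPolynomial (Fin (n + 1)) R) _ a,
          MvPolynomial.algebraMap_eq]
      rw [this]
      exact Subalgebra.algebraMap_mem _ a
    · rw [map_finsuppProd]
      rw [Finsupp.prod]
      apply Subalgebra.prod_mem
      intro i hi
      have hi0 : i ≠ 0 := by
        rintro rfl
        exact (Finsupp.mem_support_iff.mp hi) hw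
      rw [map_pow]
      refine pow_mem (Algebra.subset_adjoin ?_) _
      exact Set.mem_biUnion hi0 (Set.mem_insert _ _)
  have hPS : aP ∈ S := by
    show algebraMap (MvPolynomial (Fin (n + 1)) R) (FractionRing (MvPolynomial (Fin (n + 1)) R)) P ∈ S
    rw [hPeq, map_add]
    exact add_mem (key u p hu0) (key v q hv0)
  exact aux_mem_iff _ (X 0) aP hx hPS y
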